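/- Let E be a real inner product space (e.g., ℝ^D with D ≥ 2), let c ∈ E, and let 0 < r' < r be real numbers. Let p, p' ∈ E with ‖p − c‖ = r and ‖p' − c‖ = r', and set l = ‖p − p'‖; assume l ≥ r. Let m be a point of the segment from p' to p satisfying ⟨m − c, p − p'⟩ = 0, and set l₁ = ‖p' − m‖ and l₂ = ‖p − m‖. Let p₁, p₂ ∈ E satisfy ‖p₁ − c‖ ≤ r', ‖p₂ − c‖ ≤ r, and ‖p₁ − p₂‖ > l, and let m* be a point on the segment from p₁ to p₂ with ‖m* − p₁‖ ≥ l₁ and ‖m* − p₂‖ ≥ l₂. Then ‖m* − c‖ ≤ ‖m − c‖. -/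
import Mathlib

open scoped RealInnerProductSpace

lemma combo_norm_sq {E : Type*} [NormedAddCommGroup E] [InnerProductSpace ℝ E]
    (u v : E) (s t : ℝ) (hst : s + t = 1) :
    ‖s • u + t • v‖ ^ 2 = s * ‖u‖ ^ 2 + t * ‖v‖ ^ 2 - s * t * ‖u - v‖ ^ 2 := by
  have h1 := norm_add_sq_real (s • u) (t • v)
  have h2 := norm_sub_sq_real u v
  simp only [norm_smul, real_inner_smul_left, real_inner_smul_right, mul_pow, sq_abs,
    Real.norm_eq_abs] at h1
  linear_combination h1 + s*t*h2 + (s*‖u‖^2 + t*‖v‖^2)*hst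


lemma key_ineq (t L l₁ l₂ d A B : ℝ) (ht0 : 0 ≤ t) (ht1 : t ≤ 1)
    (hl₁ : 0 ≤ l₁) (hl₂ : 0 ≤ l₂)
    (ha : l₁ ≤ t * L) (hb : l₂ ≤ (1 - t) * L)
    (hA : A ≤ l₁ ^ 2 + d ^ 2) (hB : B ≤ l₂ ^ 2 + d ^ 2) :
    (1 - t) * A + t * B - (1 - t) * t * L ^ 2 ≤ d ^ 2 := by
  have h1 : l₁ * l₁ ≤ (t * L) * (t * L) := mul_le_mul ha ha hl₁ (hl₁.trans ha)
  have h2 : l₂ * l₂ ≤ ((1 - t) * L) * ((1 - t) * L) := mul_le_mul hb hb hl₂ (hl₂.trans hb)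
  have h3 := mul_le_mul_of_nonneg_left h1 (by linarith : (0:ℝ) ≤ 1 - t)
  have h4 := mul_le_mul_of_nonneg_left h2 ht0
  nlinarith [h3, h4]

/-- the geometric observation of Kim and Schwarzwald
(Lemma 8 of the paper). -/
theorem stmt_13 {E : Type*} [NormedAddCommGroup E] [InnerProductSpace ℝ E]
    (c p p' m p₁ p₂ mstar : E) (r r' l l₁ l₂ : ℝ)
    (hr' : 0 < r') (hr'r : r' < r)
    (hp : ‖p - c‖ = r) (hp' : ‖p' - c‖ = r')
    (hl : l = ‖p - p'‖) (hlr : r ≤ l)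
    (hmseg : m ∈ segment ℝ p' p)
    (htan : ⟪m - c, p - p'⟫ = 0)
    (hl₁ : l₁ = ‖p' - m‖) (hl₂ : l₂ = ‖p - m‖)
    (hp₁ : ‖p₁ - c‖ ≤ r') (hp₂ : ‖p₂ - c‖ ≤ r)
    (hp₁p₂ : l < ‖p₁ - p₂‖)
    (hmstarseg : mstar ∈ segment ℝ p₁ p₂)
    (hm1 : l₁ ≤ ‖mstar - p₁‖) (hm2 : l₂ ≤ ‖mstar - p₂‖) :
    ‖mstar - c‖ ≤ ‖m - c‖ := by
  obtain ⟨s1, s2, hs1, hs2, hs12, hm⟩ := hmseg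
  obtain ⟨t1, t2, ht1, ht2, ht12, hms⟩ := hmstarseg
  have hs1' : s1 = 1 - s2 := by linarith
  have ht1' : t1 = 1 - t2 := by linarith
  subst hs1' ht1'
  -- p' - m = s2 • (p' - p),  p - m = s1 • (p - p')
  have hpm' : p' - m = s2 • (p' - p) := by rw [← hm]; module
  have hpm : p - m = (1 - s2) • (p - p') := by rw [← hm]; module
  -- Pythagoras at m
  have hperp1 : ⟪p' - m, m - c⟫ = 0 := by
    rw [hpm', real_inner_smul_left, real_inner_comm]
    have h : ⟪m - c, p' - p⟫ = -⟪m - c, p - p'⟫ := by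
      rw [← inner_neg_right]; congr 1; abel
    rw [h, htan]; ring
  have hperp2 : ⟪p - m, m - c⟫ = 0 := by
    rw [hpm, real_inner_smul_left, real_inner_comm, htan]; ring
  have hpyth1 : r' ^ 2 = l₁ ^ 2 + ‖m - c‖ ^ 2 := by
    have h : p' - c = (p' - m) + (m - c) := by abel
    rw [← hp', h, norm_add_sq_real, hperp1, hl₁]; ring
  have hpyth2 : r ^ 2 = l₂ ^ 2 + ‖m - c‖ ^ 2 := by
    have h : p - c = (p - m) + (m - c) := by abel
    rw [← hp, h, norm_add_sq_real, hperp2, hl₂]; ring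
  -- distances along segment p₁ p₂
  set L := ‖p₁ - p₂‖ with hL
  have ha : ‖mstar - p₁‖ = t2 * L := by
    have h : mstar - p₁ = t2 • (p₂ - p₁) := by rw [← hms]; module
    rw [h, norm_smul, Real.norm_eq_abs, abs_of_nonneg ht2, hL, norm_sub_rev]
  have hb : ‖mstar - p₂‖ = (1 - t2) * L := by
    have h : mstar - p₂ = (1 - t2) • (p₁ - p₂) := by rw [← hms]; module
    rw [h, norm_smul, Real.norm_eq_abs, abs_of_nonneg ht1, hL]
  -- Stewart identity
  have hstew : ‖mstar - c‖ ^ 2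
      = (1 - t2) * ‖p₁ - c‖ ^ 2 + t2 * ‖p₂ - c‖ ^ 2 - (1 - t2) * t2 * L ^ 2 := by
    have h : mstar - c = (1 - t2) • (p₁ - c) + t2 • (p₂ - c) := by rw [← hms]; module
    rw [h, combo_norm_sq _ _ _ _ ht12]
    congr 2
    rw [show (p₁ - c) - (p₂ - c) = p₁ - p₂ by abel]
  have hL0 : 0 < L := lt_of_le_of_lt (le_trans (le_of_lt (hr'.trans hr'r)) hlr) hp₁p₂
  have hA : ‖p₁ - c‖ ^ 2 ≤ r' ^ 2 := pow_le_pow_left₀ (norm_nonneg _) hp₁ 2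
  have hB : ‖p₂ - c‖ ^ 2 ≤ r ^ 2 := pow_le_pow_left₀ (norm_nonneg _) hp₂ 2
  have hl₁0 : 0 ≤ l₁ := hl₁ ▸ norm_nonneg _
  have hl₂0 : 0 ≤ l₂ := hl₂ ▸ norm_nonneg _
  have ha' : l₁ ≤ t2 * L := ha ▸ hm1
  have hb' : l₂ ≤ (1 - t2) * L := hb ▸ hm2
  have key : ‖mstar - c‖ ^ 2 ≤ ‖m - c‖ ^ 2 := by
    have h := key_ineq t2 L l₁ l₂ (‖m - c‖) (‖p₁ - c‖ ^ 2) (‖p₂ - c‖ ^ 2)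
      ht2 (by linarith) hl₁0 hl₂0 ha' hb'
      (by linarith [hA, hpyth1]) (by linarith [hB, hpyth2])
    linarith [hstew, h]
  have h := Real.sqrt_le_sqrt key
  rwa [Real.sqrt_sq (norm_nonneg _), Real.sqrt_sq (norm_nonneg _)] at h
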